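/- arXiv:2511.00914 — 2 statements merged into one kernel-verified Lean document; each statement's English description precedes it below -/
import Mathlib

section
/- Every slim edge weight h : N₂ → ℂ on the countable complete graph K_ℕ is light; that is, for every n ∈ ℕ₀ the series Σ_{w∈W(n)} h(w) over all walks of length n starting at vertex 1 converges absolutely. -/
open Filter

/-- The weight of a walk `⟨w 0, …, w n⟩` in `K_ℕ`: the product of the edge weights. -/
noncomputable def wt (h : Sym2 ℕ → ℂ) {n : ℕ} (w : Fin (n + 1) → ℕ) : ℂ :=
  ∏ i : Fin n, h s(w i.castSucc, w i.succ)

/-- `w` is a walk: consecutive vertices are distinct. -/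
def IsWalk {n : ℕ} (w : Fin (n + 1) → ℕ) : Prop :=
  ∀ i : Fin n, w i.castSucc ≠ w i.succ

/-- `W n`: walks of length `n` in `K_ℕ` starting at vertex `1`. -/
def W (n : ℕ) : Set (Fin (n + 1) → ℕ) :=
  {w | w 0 = 1 ∧ IsWalk w}

/-- A weight `h` is light if for every `n` the series of walk weights over `W n`
converges absolutely. -/
def Light (h : Sym2 ℕ → ℂ) : Prop :=
  ∀ n : ℕ, Summable fun w : W n => ‖wt h w.1‖

/-- `u` belongs to `V(h,n)`: it is reachable from `1` by a walk of length at most `n`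
all of whose edges have nonzero weight. -/
def ReachableIn (h : Sym2 ℕ → ℂ) (n : ℕ) (u : ℕ) : Prop :=
  ∃ m, m ≤ n ∧ ∃ w : Fin (m + 1) → ℕ, w 0 = 1 ∧ IsWalk w ∧
    (∀ i : Fin m, h s(w i.castSucc, w i.succ) ≠ 0) ∧ w (Fin.last m) = u

/-- `u ∈ V(h)`: reachable from `1` by a walk with all edge weights nonzero. -/
def Reachable (h : Sym2 ℕ → ℂ) (u : ℕ) : Prop :=
  ∃ n, ReachableIn h n u

/-- A weight `h` is slim if for every `n` there is `c > 0` bounding all finite partial sums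
`Σ_{v∈X} |h({u,v})|` over vertices `u ∈ V(h,n)` and finite `X ⊆ ℕ ∖ {u}`. -/
def Slim (h : Sym2 ℕ → ℂ) : Prop :=
  ∀ n : ℕ, ∃ c : ℝ, 0 < c ∧ ∀ u : ℕ, ReachableIn h n u →
    ∀ X : Finset ℕ, u ∉ X → ∑ v ∈ X, ‖h s(u, v)‖ ≤ c

/-- prefix of a walk -/
def pre {n : ℕ} (w : Fin (n + 2) → ℕ) : Fin (n + 1) → ℕ := fun i => w i.castSucc

lemma wt_split (h : Sym2 ℕ → ℂ) {n : ℕ} (w : Fin (n + 2) → ℕ) :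
    wt h w = wt h (pre w) * h s(w (Fin.last n).castSucc, w (Fin.last (n+1))) := by
  unfold wt pre
  rw [Fin.prod_univ_castSucc, Fin.succ_last]
  congr 1

lemma key (h : Sym2 ℕ → ℂ) (c : ℕ → ℝ) (hc0 : ∀ n, 0 < c n)
    (hc : ∀ n u, ReachableIn h n u → ∀ X : Finset ℕ, u ∉ X → ∑ v ∈ X, ‖h s(u, v)‖ ≤ c n) :
    ∀ n (S : Finset (Fin (n + 1) → ℕ)), (∀ w ∈ S, w ∈ W n) →
      ∑ w ∈ S, ‖wt h w‖ ≤ ∏ k ∈ Finset.range n, c k := by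
  intro n
  induction n with
  | zero =>
    intro S hS
    have hsub : S ⊆ {fun _ => 1} := by
      intro w hw
      simp only [Finset.mem_singleton]
      funext i
      have : i = 0 := Fin.ext (Nat.lt_one_iff.mp i.isLt)
      rw [this]
      exact (hS w hw).1
    calc ∑ w ∈ S, ‖wt h w‖ ≤ ∑ w ∈ ({fun _ => 1} : Finset (Fin 1 → ℕ)), ‖wt h w‖ :=
          Finset.sum_le_sum_of_subset_of_nonneg hsub (fun _ _ _ => norm_nonneg _)
      _ = 1 := by simp [wt]
      _ = ∏ k ∈ Finset.range 0, c k := by simp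
  | succ n ih =>
    intro S hS
    rw [← Finset.sum_fiberwise_of_maps_to (g := pre) (t := S.image pre)
        (fun w hw => Finset.mem_image_of_mem _ hw)]
    have hpreW : ∀ p ∈ S.image pre, p ∈ W n := by
      intro p hp
      obtain ⟨w, hw, rfl⟩ := Finset.mem_image.mp hp
      obtain ⟨hw0, hwalk⟩ := hS w hw
      refine ⟨?_, fun i => ?_⟩
      · simpa [pre] using hw0
      · exact hwalk i.castSucc
    have hfiber : ∀ p ∈ S.image pre,
        ∑ w ∈ S.filter (fun w => pre w = p), ‖wt h w‖ ≤ ‖wt h p‖ * c n := by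
      intro p hp
      set F := S.filter (fun w => pre w = p) with hF
      have hmem : ∀ w ∈ F, pre w = p ∧ w ∈ W (n+1) := by
        intro w hw
        rw [hF, Finset.mem_filter] at hw
        exact ⟨hw.2, hS w hw.1⟩
      have hrw : ∀ w ∈ F, ‖wt h w‖ = ‖wt h p‖ * ‖h s(p (Fin.last n), w (Fin.last (n+1)))‖ := by
        intro w hw
        obtain ⟨hpw, _⟩ := hmem w hw
        rw [wt_split, norm_mul, ← hpw]
        rfl
      rw [Finset.sum_congr rfl hrw, ← Finset.mul_sum]
      by_cases hz : wt h p = 0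
      · simp [hz]
      · have hXeqI : ∀ w1 ∈ F, ∀ w2 ∈ F, w1 (Fin.last (n+1)) = w2 (Fin.last (n+1)) → w1 = w2 := by
          intro w1 h1 w2 h2 heq
          have hp1 := (hmem w1 h1).1
          have hp2 := (hmem w2 h2).1
          funext i
          cases i using Fin.lastCases with
          | last => exact heq
          | cast j =>
            have e1 : w1 j.castSucc = p j := by rw [← hp1]; rfl
            have e2 : w2 j.castSucc = p j := by rw [← hp2]; rfl
            rw [e1, e2]
        have e := Finset.sum_image (f := fun v => ‖h s(p (Fin.last n), v)‖)
            (g := fun w => w (Fin.last (n+1))) (s := F) hXeqI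
        rw [← e]
        have hnotmem : p (Fin.last n) ∉ F.image (fun w => w (Fin.last (n+1))) := by
          intro hmem'
          obtain ⟨w, hw, heq⟩ := Finset.mem_image.mp hmem'
          obtain ⟨hpw, _, hwalk⟩ := hmem w hw
          have := hwalk (Fin.last n)
          apply this
          rw [show (Fin.last n).succ = Fin.last (n+1) from Fin.succ_last n, heq, ← hpw]
          rfl
        have hreach : ReachableIn h n (p (Fin.last n)) := by
          refine ⟨n, le_refl n, p, (hpreW p hp).1, (hpreW p hp).2, ?_, rfl⟩
          intro i
          intro hzero
          apply hz
          unfold wt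
          exact Finset.prod_eq_zero (Finset.mem_univ i) hzero
        have hb := hc n (p (Fin.last n)) hreach _ hnotmem
        exact mul_le_mul_of_nonneg_left hb (norm_nonneg _)
    calc ∑ p ∈ S.image pre, ∑ w ∈ S.filter (fun w => pre w = p), ‖wt h w‖
        ≤ ∑ p ∈ S.image pre, ‖wt h p‖ * c n := Finset.sum_le_sum hfiber
      _ = (∑ p ∈ S.image pre, ‖wt h p‖) * c n := by rw [Finset.sum_mul]
      _ ≤ (∏ k ∈ Finset.range n, c k) * c n := by
          apply mul_le_mul_of_nonneg_right (ih _ hpreW) (hc0 n).le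
      _ = ∏ k ∈ Finset.range (n+1), c k := (Finset.prod_range_succ c n).symm

/-- Every slim weight is light. -/
theorem stmt4 (h : Sym2 ℕ → ℂ) (hslim : Slim h) : Light h := by
  choose c hc0 hc using hslim
  intro n
  apply summable_of_sum_le (c := ∏ k ∈ Finset.range n, c k)
    (fun w => norm_nonneg _)
  intro u
  have := key h c hc0 hc n (u.image Subtype.val) ?_
  · rw [Finset.sum_image (fun a _ b _ hh => Subtype.val_injective hh)] at this
    exact this
  · intro w hw
    obtain ⟨⟨x, hx⟩, _, rfl⟩ := Finset.mem_image.mp hw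
    exact hx
end

section
/- Let U, V, W ∈ ℝ≥0[[x]] with V(0) > 0 and W(0) > 0, and suppose U(x)² = 1 − V(x)/W(x) in ℂ[[x]]. If U, V, W converge absolutely for every x ∈ [0,1), the function F_V is bounded on [0,1), and the partial coefficient sums of W tend to +∞, then the partial coefficient sums of U converge and their limit is 1. -/
open Filter PowerSeries
open scoped Topology

/-- If `U² = 1 − V/W` with nonnegative real coefficients, `V(0) > 0`, `W(0) > 0`, all three
converging absolutely on `[0,1)`, `F_V` bounded on `[0,1)` and the partial coefficient sums
of `W` tending to `+∞`, then the partial coefficient sums of `U` converge to `1`. -/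
theorem stmt9 (U V W : PowerSeries ℝ)
    (hUnn : ∀ n, 0 ≤ coeff n U) (hVnn : ∀ n, 0 ≤ coeff n V)
    (hWnn : ∀ n, 0 ≤ coeff n W)
    (hV0 : 0 < constantCoeff V) (hW0 : 0 < constantCoeff W)
    (heq : U ^ 2 = 1 - V * W⁻¹)
    (hUconv : ∀ x : ℝ, 0 ≤ x → x < 1 → Summable fun n => coeff n U * x ^ n)
    (hVconv : ∀ x : ℝ, 0 ≤ x → x < 1 → Summable fun n => coeff n V * x ^ n)
    (hWconv : ∀ x : ℝ, 0 ≤ x → x < 1 → Summable fun n => coeff n W * x ^ n)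
    (hVbdd : ∃ M : ℝ, ∀ x : ℝ, 0 ≤ x → x < 1 → (∑' n, coeff n V * x ^ n) ≤ M)
    (hWinf : Tendsto (fun n => ∑ j ∈ Finset.range (n + 1), coeff j W) atTop atTop) :
    Tendsto (fun n => ∑ j ∈ Finset.range (n + 1), coeff j U) atTop (nhds 1) := by
  have hW0' : constantCoeff W ≠ 0 := hW0.ne'
  -- power series identity with only nonnegative coefficients
  have hkey : V + U ^ 2 * W = W := by
    have h1 : U ^ 2 * W = W - V * (W⁻¹ * W) := by rw [heq]; ring
    rw [PowerSeries.inv_mul_cancel W hW0', mul_one] at h1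
    rw [h1]; ring
  have hco : ∀ n, coeff n V + coeff n (U ^ 2 * W) = coeff n W := by
    intro n; rw [← map_add, hkey]
  have hU2nn : ∀ n, 0 ≤ coeff n (U ^ 2) := by
    intro n
    rw [sq, PowerSeries.coeff_mul]
    exact Finset.sum_nonneg fun p _ => mul_nonneg (hUnn _) (hUnn _)
  -- the key analytic identity
  have key : ∀ x : ℝ, 0 ≤ x → x < 1 →
      (∑' n, coeff n V * x ^ n) +
        (∑' n, coeff n U * x ^ n) ^ 2 * (∑' n, coeff n W * x ^ n)
        = ∑' n, coeff n W * x ^ n := by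
    intro x hx0 hx1
    have hsU := hUconv x hx0 hx1
    have hsV := hVconv x hx0 hx1
    have hsW := hWconv x hx0 hx1
    have hnU : Summable fun n => ‖coeff n U * x ^ n‖ :=
      hsU.congr fun n =>
        (Real.norm_of_nonneg (mul_nonneg (hUnn n) (pow_nonneg hx0 n))).symm
    have hnW : Summable fun n => ‖coeff n W * x ^ n‖ :=
      hsW.congr fun n =>
        (Real.norm_of_nonneg (mul_nonneg (hWnn n) (pow_nonneg hx0 n))).symm
    have hanti : ∀ n : ℕ, ∑ p ∈ Finset.HasAntidiagonal.antidiagonal n,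
        (coeff p.1 U * x ^ p.1) * (coeff p.2 U * x ^ p.2) = coeff n (U ^ 2) * x ^ n := by
      intro n
      rw [sq, PowerSeries.coeff_mul, Finset.sum_mul]
      refine Finset.sum_congr rfl fun p hp => ?_
      rw [Finset.HasAntidiagonal.mem_antidiagonal] at hp
      rw [← hp, pow_add]; ring
    have hsq : (∑' n, coeff n U * x ^ n) ^ 2 = ∑' n, coeff n (U ^ 2) * x ^ n := by
      rw [sq, tsum_mul_tsum_eq_tsum_sum_antidiagonal_of_summable_norm hnU hnU]
      exact tsum_congr hanti
    have hsU2 : Summable fun n => coeff n (U ^ 2) * x ^ n :=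
      ((summable_norm_sum_mul_antidiagonal_of_summable_norm hnU hnU).of_norm).congr hanti
    have hnU2 : Summable fun n => ‖coeff n (U ^ 2) * x ^ n‖ :=
      hsU2.congr fun n =>
        (Real.norm_of_nonneg (mul_nonneg (hU2nn n) (pow_nonneg hx0 n))).symm
    have hprod : (∑' n, coeff n (U ^ 2) * x ^ n) * (∑' n, coeff n W * x ^ n)
        = ∑' n, coeff n (U ^ 2 * W) * x ^ n := by
      rw [tsum_mul_tsum_eq_tsum_sum_antidiagonal_of_summable_norm hnU2 hnW]
      refine tsum_congr fun n => ?_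
      rw [PowerSeries.coeff_mul, Finset.sum_mul]
      refine Finset.sum_congr rfl fun p hp => ?_
      rw [Finset.HasAntidiagonal.mem_antidiagonal] at hp
      rw [← hp, pow_add]; ring
    have hsUW : Summable fun n => coeff n (U ^ 2 * W) * x ^ n := by
      refine (hsW.sub hsV).congr fun n => ?_
      linear_combination (-(x ^ n)) * hco n
    calc (∑' n, coeff n V * x ^ n) +
          (∑' n, coeff n U * x ^ n) ^ 2 * (∑' n, coeff n W * x ^ n)
        = (∑' n, coeff n V * x ^ n) + ∑' n, coeff n (U ^ 2 * W) * x ^ n := by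
          rw [hsq, hprod]
      _ = ∑' n, (coeff n V * x ^ n + coeff n (U ^ 2 * W) * x ^ n) :=
          (Summable.tsum_add hsV hsUW).symm
      _ = ∑' n, coeff n W * x ^ n := tsum_congr fun n => by
          linear_combination (x ^ n) * hco n
  -- F_W is positive, F_V nonnegative, F_U nonnegative
  have hFWpos : ∀ x : ℝ, 0 ≤ x → x < 1 → 0 < ∑' n, coeff n W * x ^ n := by
    intro x hx0 hx1
    have h0 : (coeff 0 W) * x ^ 0 ≤ ∑' n, coeff n W * x ^ n :=
      Summable.le_tsum (hWconv x hx0 hx1) 0 fun j _ => mul_nonneg (hWnn j) (pow_nonneg hx0 j)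
    have : (0:ℝ) < coeff 0 W * x ^ 0 := by
      simpa [PowerSeries.coeff_zero_eq_constantCoeff] using hW0
    linarith
  have hFVnn : ∀ x : ℝ, 0 ≤ x → x < 1 → 0 ≤ ∑' n, coeff n V * x ^ n := fun x hx0 _ =>
    tsum_nonneg fun n => mul_nonneg (hVnn n) (pow_nonneg hx0 n)
  have hFUnn : ∀ x : ℝ, 0 ≤ x → x < 1 → 0 ≤ ∑' n, coeff n U * x ^ n := fun x hx0 _ =>
    tsum_nonneg fun n => mul_nonneg (hUnn n) (pow_nonneg hx0 n)
  -- F_U ≤ 1 on [0,1)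
  have hFU1 : ∀ x : ℝ, 0 ≤ x → x < 1 → (∑' n, coeff n U * x ^ n) ≤ 1 := by
    intro x hx0 hx1
    have hk := key x hx0 hx1
    have hw := hFWpos x hx0 hx1
    have hv := hFVnn x hx0 hx1
    have hsq1 : (∑' n, coeff n U * x ^ n) ^ 2 ≤ 1 := by
      nlinarith
    nlinarith [hFUnn x hx0 hx1]
  set s : ℕ → ℝ := fun n => ∑ j ∈ Finset.range (n + 1), coeff j U with hsdef
  -- partial sums are ≤ 1
  have hsle : ∀ n, s n ≤ 1 := by
    intro n
    have hcont : Tendsto (fun x : ℝ => ∑ j ∈ Finset.range (n + 1), coeff j U * x ^ j)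
        (𝓝[<] (1:ℝ)) (𝓝 (s n)) := by
      have h1 : ContinuousAt (fun x : ℝ => ∑ j ∈ Finset.range (n + 1), coeff j U * x ^ j) 1 := by
        fun_prop
      have h2 : Tendsto (fun x : ℝ => ∑ j ∈ Finset.range (n + 1), coeff j U * x ^ j)
          (𝓝[<] (1:ℝ)) (𝓝 (∑ j ∈ Finset.range (n + 1), coeff j U * (1:ℝ) ^ j)) :=
        h1.tendsto.mono_left nhdsWithin_le_nhds
      simpa [hsdef] using h2
    refine le_of_tendsto hcont ?_
    have h0 : ∀ᶠ x : ℝ in 𝓝[<] 1, 0 ≤ x :=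
      eventually_nhdsWithin_of_eventually_nhds (eventually_ge_nhds (by norm_num))
    filter_upwards [h0, self_mem_nhdsWithin] with x hx0 hx1
    have hx1' : x < 1 := hx1
    calc ∑ j ∈ Finset.range (n + 1), coeff j U * x ^ j
        ≤ ∑' j, coeff j U * x ^ j :=
          Summable.sum_le_tsum _ (fun j _ => mul_nonneg (hUnn j) (pow_nonneg hx0 j))
            (hUconv x hx0 hx1')
      _ ≤ 1 := hFU1 x hx0 hx1'
  have hmono : Monotone s := fun a b hab =>
    Finset.sum_le_sum_of_subset_of_nonneg
      (Finset.range_subset_range.2 (by omega)) (fun j _ _ => hUnn j)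
  have hbdd : BddAbove (Set.range s) := ⟨1, by rintro y ⟨n, rfl⟩; exact hsle n⟩
  have hL : Tendsto s atTop (𝓝 (⨆ n, s n)) := tendsto_atTop_ciSup hmono hbdd
  set L : ℝ := ⨆ n, s n with hLdef
  have hL1 : L ≤ 1 := ciSup_le hsle
  have hL0 : 0 ≤ L := le_trans (Finset.sum_nonneg fun j _ => hUnn j) (le_ciSup hbdd 0)
  -- U's coefficients are summable with sum L
  have hsumU : Summable fun n => coeff n U := by
    refine summable_of_sum_range_le (c := 1) hUnn fun n => ?_
    cases n with
    | zero => simp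
    | succ m => exact hsle m
  have htsum : ∑' n, coeff n U = L := by
    have h1 : Tendsto (fun n => ∑ j ∈ Finset.range n, coeff j U) atTop
        (𝓝 (∑' n, coeff n U)) := hsumU.hasSum.tendsto_sum_nat
    have h2 : Tendsto s atTop (𝓝 (∑' n, coeff n U)) :=
      h1.comp (tendsto_add_atTop_nat 1)
    exact tendsto_nhds_unique h2 hL
  -- F_U ≤ L on [0,1)
  have hFUL : ∀ x : ℝ, 0 ≤ x → x < 1 → (∑' n, coeff n U * x ^ n) ≤ L := by
    intro x hx0 hx1
    rw [← htsum]
    refine Summable.tsum_le_tsum (fun n => ?_) (hUconv x hx0 hx1) hsumU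
    calc coeff n U * x ^ n ≤ coeff n U * 1 :=
          mul_le_mul_of_nonneg_left (pow_le_one₀ hx0 hx1.le) (hUnn n)
      _ = coeff n U := mul_one _
  -- L ≥ 1
  have hge : 1 ≤ L := by
    by_contra h
    push_neg at h
    obtain ⟨M, hM⟩ := hVbdd
    have hM0 : 0 ≤ M := le_trans (hFVnn 0 le_rfl one_pos) (hM 0 le_rfl one_pos)
    have hpos : 0 < 1 - L ^ 2 := by nlinarith
    set C : ℝ := M / (1 - L ^ 2) + 1 with hCdef
    have hCM : M < C * (1 - L ^ 2) := by
      rw [hCdef, add_mul, one_mul, div_mul_cancel₀ _ hpos.ne']; linarith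
    obtain ⟨n, hn⟩ := (hWinf.eventually_ge_atTop (C + 1)).exists
    have hcont : Tendsto (fun x : ℝ => ∑ j ∈ Finset.range (n + 1), coeff j W * x ^ j)
        (𝓝[<] (1:ℝ)) (𝓝 (∑ j ∈ Finset.range (n + 1), coeff j W)) := by
      have h1 : ContinuousAt (fun x : ℝ => ∑ j ∈ Finset.range (n + 1), coeff j W * x ^ j) 1 := by
        fun_prop
      have h2 : Tendsto (fun x : ℝ => ∑ j ∈ Finset.range (n + 1), coeff j W * x ^ j)
          (𝓝[<] (1:ℝ)) (𝓝 (∑ j ∈ Finset.range (n + 1), coeff j W * (1:ℝ) ^ j)) :=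
        h1.tendsto.mono_left nhdsWithin_le_nhds
      simpa using h2
    have hev : ∀ᶠ x : ℝ in 𝓝[<] 1,
        C < ∑ j ∈ Finset.range (n + 1), coeff j W * x ^ j :=
      hcont.eventually (eventually_gt_nhds (by linarith))
    have h0 : ∀ᶠ x : ℝ in 𝓝[<] 1, 0 ≤ x :=
      eventually_nhdsWithin_of_eventually_nhds (eventually_ge_nhds (by norm_num))
    obtain ⟨x, hxC, hx0, hx1⟩ := (hev.and (h0.and self_mem_nhdsWithin)).exists
    have hx1' : x < 1 := hx1
    have hFW : C < ∑' j, coeff j W * x ^ j :=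
      lt_of_lt_of_le hxC
        (Summable.sum_le_tsum _ (fun j _ => mul_nonneg (hWnn j) (pow_nonneg hx0 j))
          (hWconv x hx0 hx1'))
    have hk := key x hx0 hx1'
    have hUx := hFUL x hx0 hx1'
    have hUnnx := hFUnn x hx0 hx1'
    have hVx := hM x hx0 hx1'
    have hsq : (∑' n, coeff n U * x ^ n) ^ 2 ≤ L ^ 2 := by nlinarith
    have hC0 : 0 < C := by positivity
    nlinarith [hFWpos x hx0 hx1']
  have hLeq : L = 1 := le_antisymm hL1 hge
  rw [hLeq] at hL
  exact hL
end
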